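/- Let $a, A, M$ be positive integers and $Y \geq 3$ a real number, with $\gcd(a, A) = 1$ and $a + (M-1)A \leq Y$. Then $\sum_{m=0}^{M-1} d(a + mA) \leq 2M(1 + \frac{1}{2}\log Y) + 2\sqrt{Y}$. -/

import Mathlib

lemma aux_card_divisors_le (n : ℕ) (hn : 0 < n) :
    n.divisors.card ≤ 2 * (n.divisors.filter (fun h => h * h ≤ n)).card := by
  classical
  have hsplit := Finset.card_filter_add_card_filter_not
    (s := n.divisors) (p := fun h => h * h ≤ n)
  have hinj : (n.divisors.filter (fun h => ¬ h * h ≤ n)).card ≤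
      (n.divisors.filter (fun h => h * h ≤ n)).card := by
    apply Finset.card_le_card_of_injOn (fun d => n / d)
    · intro d hd
      simp only [Finset.coe_filter, Set.mem_setOf_eq, Finset.mem_filter, Nat.mem_divisors] at hd ⊢
      obtain ⟨⟨hdvd, hn0⟩, hbig⟩ := hd
      push_neg at hbig
      have hd0 : 0 < d := Nat.pos_of_dvd_of_pos hdvd hn
      refine ⟨⟨Nat.div_dvd_of_dvd hdvd, hn0⟩, ?_⟩
      have h1 : n / d < d := by
        rw [Nat.div_lt_iff_lt_mul hd0]; exact hbig
      calc n / d * (n / d) ≤ n / d * d := Nat.mul_le_mul_left _ h1.le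
        _ = n := Nat.div_mul_cancel hdvd
    · intro x hx y hy hxy
      have hx' : x ∣ n := (Nat.mem_divisors.mp (Finset.mem_filter.mp hx).1).1
      have hy' : y ∣ n := (Nat.mem_divisors.mp (Finset.mem_filter.mp hy).1).1
      have hxy' : n / x = n / y := hxy
      rw [← Nat.div_div_self hx' hn.ne', ← Nat.div_div_self hy' hn.ne', hxy']
  omega

lemma aux_count_le (a A M h : ℕ) (hcop : Nat.gcd a A = 1) (hh : 0 < h) (hM : 0 < M) :
    ((Finset.range M).filter (fun m => h ∣ a + m * A)).card ≤ (M - 1) / h + 1 := by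
  classical
  set s := (Finset.range M).filter (fun m => h ∣ a + m * A) with hs
  rcases s.eq_empty_or_nonempty with hse | ⟨m₁, hm₁⟩
  · simp [hse]
  · have hm₁' : h ∣ a + m₁ * A := (Finset.mem_filter.mp hm₁).2
    have hcopAh : Nat.gcd h A = 1 := by
      have hg : Nat.gcd h A ∣ a := by
        have h1 : Nat.gcd h A ∣ a + m₁ * A := (Nat.gcd_dvd_left h A).trans hm₁'
        have h2 : Nat.gcd h A ∣ m₁ * A := Dvd.dvd.mul_left (Nat.gcd_dvd_right h A) m₁
        have h3 := Nat.dvd_sub h1 h2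
        simpa using h3
      have h4 : Nat.gcd h A ∣ Nat.gcd a A := Nat.dvd_gcd hg (Nat.gcd_dvd_right h A)
      rw [hcop] at h4
      exact Nat.eq_one_of_dvd_one h4
    calc s.card ≤ (Finset.range ((M - 1) / h + 1)).card := by
          apply Finset.card_le_card_of_injOn (fun m => m / h)
          · intro m hm
            have hmM : m < M := Finset.mem_range.mp (Finset.mem_filter.mp hm).1
            have : m / h ≤ (M - 1) / h := Nat.div_le_div_right (by omega)
            simpa [Finset.mem_range] using Nat.lt_succ_of_le this
          · intro x hx y hy hxy
            have hxd : h ∣ a + x * A := (Finset.mem_filter.mp hx).2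
            have hyd : h ∣ a + y * A := (Finset.mem_filter.mp hy).2
            have hmod : x ≡ y [MOD h] := by
              have h1 : a + x * A ≡ a + y * A [MOD h] :=
                ((Nat.modEq_zero_iff_dvd).mpr hxd).trans
                  ((Nat.modEq_zero_iff_dvd).mpr hyd).symm
              have h2 : x * A ≡ y * A [MOD h] := Nat.ModEq.add_left_cancel' a h1
              exact Nat.ModEq.cancel_right_of_coprime hcopAh h2
            have hxy' : x / h = y / h := hxy
            have hmm : x % h = y % h := hmod
            calc x = h * (x / h) + x % h := (Nat.div_add_mod x h).symm
              _ = h * (y / h) + y % h := by rw [hxy', hmm]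
              _ = y := Nat.div_add_mod y h
      _ = (M - 1) / h + 1 := Finset.card_range _

theorem divisor_sum_arith_prog_bound (a A M : ℕ) (Y : ℝ) (ha : 0 < a) (hA : 0 < A)
    (hM : 0 < M) (hY : 3 ≤ Y) (hcop : Nat.gcd a A = 1)
    (hle : ((a + (M - 1) * A : ℕ) : ℝ) ≤ Y) :
    ∑ m ∈ Finset.range M, ((a + m * A).divisors.card : ℝ)
      ≤ 2 * M * (1 + Real.log Y / 2) + 2 * Real.sqrt Y := by
  classical
  set H : ℕ := ⌊Real.sqrt Y⌋₊ with hH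
  have hY0 : (0:ℝ) < Y := by linarith
  have hsqrt1 : (1:ℝ) ≤ Real.sqrt Y := by
    rw [show (1:ℝ) = Real.sqrt 1 by simp]
    exact Real.sqrt_le_sqrt (by linarith)
  have hH1 : 1 ≤ H := Nat.le_floor (by exact_mod_cast hsqrt1)
  have hHle : (H : ℝ) ≤ Real.sqrt Y := Nat.floor_le (Real.sqrt_nonneg Y)
  -- each term's value is ≤ Y
  have hterm_le : ∀ m ∈ Finset.range M, ((a + m * A : ℕ) : ℝ) ≤ Y := by
    intro m hm
    have hmM : m < M := Finset.mem_range.mp hm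
    have : a + m * A ≤ a + (M - 1) * A := by
      have : m ≤ M - 1 := by omega
      exact Nat.add_le_add_left (Nat.mul_le_mul_right _ this) _
    calc ((a + m * A : ℕ) : ℝ) ≤ ((a + (M - 1) * A : ℕ) : ℝ) := by exact_mod_cast this
      _ ≤ Y := hle
  -- small divisors lie in Icc 1 H
  have hsubset : ∀ m ∈ Finset.range M,
      ((a + m * A).divisors.filter (fun h => h * h ≤ a + m * A)) ⊆
        (Finset.Icc 1 H).filter (fun h => h ∣ a + m * A) := by
    intro m hm d hd
    simp only [Finset.mem_filter, Nat.mem_divisors, Finset.mem_Icc] at hd ⊢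
    obtain ⟨⟨hdvd, hn0⟩, hsmall⟩ := hd
    have hd0 : 0 < d := Nat.pos_of_dvd_of_pos hdvd (by positivity)
    refine ⟨⟨hd0, ?_⟩, hdvd⟩
    apply Nat.le_floor
    rw [show Real.sqrt Y = Real.sqrt Y from rfl]
    have hdY : (d : ℝ) * d ≤ Y := by
      calc ((d : ℝ) * d) = ((d * d : ℕ) : ℝ) := by push_cast; ring
        _ ≤ ((a + m * A : ℕ) : ℝ) := by exact_mod_cast hsmall
        _ ≤ Y := hterm_le m hm
    nlinarith [Real.sq_sqrt hY0.le, Real.sqrt_nonneg Y,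
      sq_nonneg ((d:ℝ) - Real.sqrt Y)]
  -- main chain, in ℕ first
  have hnat : ∑ m ∈ Finset.range M, (a + m * A).divisors.card ≤
      2 * ∑ h ∈ Finset.Icc 1 H,
        ((Finset.range M).filter (fun m => h ∣ a + m * A)).card := by
    calc ∑ m ∈ Finset.range M, (a + m * A).divisors.card
        ≤ ∑ m ∈ Finset.range M,
            2 * (((Finset.Icc 1 H).filter (fun h => h ∣ a + m * A)).card) := by
          apply Finset.sum_le_sum
          intro m hm
          exact le_trans (aux_card_divisors_le _ (by positivity))
            (Nat.mul_le_mul_left 2 (Finset.card_le_card (hsubset m hm)))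
      _ = 2 * ∑ m ∈ Finset.range M,
            ((Finset.Icc 1 H).filter (fun h => h ∣ a + m * A)).card := by
          rw [Finset.mul_sum]
      _ = 2 * ∑ h ∈ Finset.Icc 1 H,
            ((Finset.range M).filter (fun m => h ∣ a + m * A)).card := by
          congr 1
          simp_rw [Finset.card_filter]
          exact Finset.sum_comm
  -- bound each inner count in ℝ
  have hcount : ∀ h ∈ Finset.Icc 1 H,
      ((((Finset.range M).filter (fun m => h ∣ a + m * A)).card : ℝ)) ≤
        (M : ℝ) / h + 1 := by
    intro h hh
    have hh1 : 1 ≤ h := (Finset.mem_Icc.mp hh).1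
    have := aux_count_le a A M h hcop (by omega) hM
    calc ((((Finset.range M).filter (fun m => h ∣ a + m * A)).card : ℝ))
        ≤ (((M - 1) / h + 1 : ℕ) : ℝ) := by exact_mod_cast this
      _ = (((M - 1) / h : ℕ) : ℝ) + 1 := by push_cast; ring
      _ ≤ ((M - 1 : ℕ) : ℝ) / h + 1 := by
          have := Nat.cast_div_le (α := ℝ) (m := M - 1) (n := h)
          linarith
      _ ≤ (M : ℝ) / h + 1 := by
          have h0 : (0:ℝ) < h := by exact_mod_cast hh1
          have : ((M - 1 : ℕ) : ℝ) ≤ (M : ℝ) := by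
            have : M - 1 ≤ M := Nat.sub_le _ _
            exact_mod_cast this
          gcongr
  -- harmonic bound
  have hharm : ∑ h ∈ Finset.Icc 1 H, (1 : ℝ) / h ≤ 1 + Real.log Y / 2 := by
    have h1 : ∑ h ∈ Finset.Icc 1 H, (1 : ℝ) / h = ((harmonic H : ℚ) : ℝ) := by
      rw [harmonic_eq_sum_Icc]
      push_cast
      simp [one_div]
    rw [h1]
    have h2 := harmonic_le_one_add_log H
    have h3 : Real.log H ≤ Real.log Y / 2 := by
      rw [← Real.log_sqrt hY0.le]
      apply Real.log_le_log (by exact_mod_cast hH1) hHle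
    linarith
  -- assemble
  calc ∑ m ∈ Finset.range M, ((a + m * A).divisors.card : ℝ)
      ≤ ((2 * ∑ h ∈ Finset.Icc 1 H,
          ((Finset.range M).filter (fun m => h ∣ a + m * A)).card : ℕ) : ℝ) := by
        exact_mod_cast hnat
    _ = 2 * ∑ h ∈ Finset.Icc 1 H,
          ((((Finset.range M).filter (fun m => h ∣ a + m * A)).card : ℝ)) := by
        push_cast; ring
    _ ≤ 2 * ∑ h ∈ Finset.Icc 1 H, ((M : ℝ) / h + 1) := by
        gcongr with h hh
        exact hcount h hh
    _ = 2 * ((M : ℝ) * ∑ h ∈ Finset.Icc 1 H, (1:ℝ) / h + H) := by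
        rw [Finset.sum_add_distrib, Finset.mul_sum]
        simp [mul_one_div, div_eq_mul_inv]
    _ ≤ 2 * ((M : ℝ) * (1 + Real.log Y / 2) + Real.sqrt Y) := by
        gcongr
    _ = 2 * M * (1 + Real.log Y / 2) + 2 * Real.sqrt Y := by ring
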